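/- Let Δ be a group with index-2 subgroup Δ⁺ and let H, K be normal subgroups of Δ⁺ with K ≤ H, such that K·K^r = Δ⁺ (K is 'totally chiral'), where K^r = r⁻¹Kr for r ∈ Δ \ Δ⁺. Let L = K ∩ H^r. Then L^r / (L ∩ L^r) ≅ H/K. -/

import Mathlib

open scoped Pointwise


/-- Let `P = Δ⁺` be an index-2 subgroup of `Δ`, `r ∈ Δ \ P`, and `H`, `K` normal
subgroups of `P` with `K ≤ H` and `K·K^r = P` (`K` totally chiral).  With
`L = K ⊓ H^r` and `L_Δ = L ⊓ L^r`, one has `L^r/L_Δ ≅ H/K`. -/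
theorem stmt_13 {Δ : Type*} [Group Δ] (P : Subgroup Δ) (hP : P.index = 2)
    (r : Δ) (hr : r ∉ P)
    (H K : Subgroup Δ) (hHP : H ≤ P) (hKP : K ≤ P) (hKH : K ≤ H)
    (hHnorm : ∀ g ∈ P, ∀ h ∈ H, g * h * g⁻¹ ∈ H)
    (hKnorm : ∀ g ∈ P, ∀ k ∈ K, g * k * g⁻¹ ∈ K)
    (Hr Kr : Subgroup Δ)
    (hHr : Hr = H.map (MulAut.conj r⁻¹).toMonoidHom)
    (hKr : Kr = K.map (MulAut.conj r⁻¹).toMonoidHom)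
    (htc : K ⊔ Kr = P)
    (L Lr : Subgroup Δ)
    (hL : L = K ⊓ Hr)
    (hLr : Lr = L.map (MulAut.conj r⁻¹).toMonoidHom)
    [h₁ : ((L ⊓ Lr).subgroupOf Lr).Normal]
    [h₂ : (K.subgroupOf H).Normal] :
    Nonempty ((↥Lr ⧸ (L ⊓ Lr).subgroupOf Lr) ≃* (↥H ⧸ K.subgroupOf H)) := by
  -- r * r ∈ P
  have hrr : r * r ∈ P := Subgroup.mul_self_mem_of_index_two hP r
  have hrrinv : (r * r)⁻¹ ∈ P := inv_mem hrr
  -- membership description of conjugate subgroups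
  have hmemKr : ∀ x, x ∈ Kr ↔ ∃ k ∈ K, x = r⁻¹ * k * r := by
    intro x
    subst hKr
    simp only [Subgroup.mem_map, MulEquiv.coe_toMonoidHom, MulAut.conj_apply, inv_inv]
    constructor
    · rintro ⟨k, hk, rfl⟩; exact ⟨k, hk, rfl⟩
    · rintro ⟨k, hk, rfl⟩; exact ⟨k, hk, rfl⟩
  have hmemHr : ∀ x, x ∈ Hr ↔ ∃ h ∈ H, x = r⁻¹ * h * r := by
    intro x
    subst hHr
    simp only [Subgroup.mem_map, MulEquiv.coe_toMonoidHom, MulAut.conj_apply, inv_inv]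
    constructor
    · rintro ⟨h, hh, rfl⟩; exact ⟨h, hh, rfl⟩
    · rintro ⟨h, hh, rfl⟩; exact ⟨h, hh, rfl⟩
  have hmemLr : ∀ x, x ∈ Lr ↔ ∃ l ∈ L, x = r⁻¹ * l * r := by
    intro x
    subst hLr
    simp only [Subgroup.mem_map, MulEquiv.coe_toMonoidHom, MulAut.conj_apply, inv_inv]
    constructor
    · rintro ⟨l, hl, rfl⟩; exact ⟨l, hl, rfl⟩
    · rintro ⟨l, hl, rfl⟩; exact ⟨l, hl, rfl⟩
  -- Lr ≤ H
  have hLrH : Lr ≤ H := by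
    intro x hx
    obtain ⟨l, hl, rfl⟩ := (hmemLr x).1 hx
    have hlHr : l ∈ Hr := (hL ▸ hl : l ∈ K ⊓ Hr).2
    obtain ⟨h, hh, rfl⟩ := (hmemHr l).1 hlHr
    have : (r * r)⁻¹ * h * ((r * r)⁻¹)⁻¹ ∈ H := hHnorm _ hrrinv h hh
    simpa [mul_assoc] using this
  -- Lr ≤ Kr
  have hLrKr : Lr ≤ Kr := by
    intro x hx
    obtain ⟨l, hl, rfl⟩ := (hmemLr x).1 hx
    exact (hmemKr _).2 ⟨l, (hL ▸ hl : l ∈ K ⊓ Hr).1, rfl⟩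
  -- Kr ≤ Hr
  have hKrHr : Kr ≤ Hr := by
    intro x hx
    obtain ⟨k, hk, rfl⟩ := (hmemKr x).1 hx
    exact (hmemHr _).2 ⟨k, hKH hk, rfl⟩
  -- Kr ≤ P
  have hKrP : Kr ≤ P := by
    intro x hx
    obtain ⟨k, hk, rfl⟩ := (hmemKr x).1 hx
    have hrinv : r⁻¹ ∉ P := fun h => hr (by simpa using inv_mem h)
    have h1 : r⁻¹ * k ∉ P := by
      rw [Subgroup.mul_mem_iff_of_index_two hP]
      exact fun hiff => hrinv (hiff.mpr (hKP hk))
    rw [Subgroup.mul_mem_iff_of_index_two hP]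
    exact iff_of_false h1 hr
  -- x ∈ Kr ∩ H implies x ∈ Lr
  have hKrH_Lr : ∀ x, x ∈ Kr → x ∈ H → x ∈ Lr := by
    intro x hxKr hxH
    obtain ⟨k, hk, rfl⟩ := (hmemKr x).1 hxKr
    refine (hmemLr _).2 ⟨k, ?_, rfl⟩
    rw [hL]
    refine ⟨hk, (hmemHr _).2 ⟨r * k * r⁻¹, ?_, by group⟩⟩
    have := hHnorm (r * r) hrr _ hxH
    have heq : r * r * (r⁻¹ * k * r) * (r * r)⁻¹ = r * k * r⁻¹ := by group
    rwa [heq] at this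
  -- the homomorphism Lr →* H ⧸ K.subgroupOf H
  let f : ↥Lr →* ↥H ⧸ K.subgroupOf H :=
    (QuotientGroup.mk' (K.subgroupOf H)).comp (Subgroup.inclusion hLrH)
  -- surjectivity
  have hsurj : Function.Surjective f := by
    intro q
    obtain ⟨⟨h, hh⟩, rfl⟩ := QuotientGroup.mk'_surjective (K.subgroupOf H) q
    -- decompose h = k * x with k ∈ K, x ∈ Kr, working inside P
    haveI hKnormal : (K.subgroupOf P).Normal := by
      constructor
      rintro ⟨n, hnP⟩ hn ⟨g, hgP⟩
      exact hKnorm g hgP n hn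
    have hsup : K.subgroupOf P ⊔ Kr.subgroupOf P = ⊤ := by
      rw [← Subgroup.subgroupOf_sup hKP hKrP, htc, Subgroup.subgroupOf_self]
    have hmem : (⟨h, hHP hh⟩ : ↥P) ∈ K.subgroupOf P ⊔ Kr.subgroupOf P := by
      rw [hsup]; trivial
    have : (⟨h, hHP hh⟩ : ↥P) ∈ ((K.subgroupOf P : Subgroup P) : Set P) * (Kr.subgroupOf P : Set P) := by
      rwa [← Subgroup.normal_mul, SetLike.mem_coe]
    obtain ⟨a, ha, b, hb, hab⟩ := this
    have hk : (a : Δ) ∈ K := ha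
    have hbKr : (b : Δ) ∈ Kr := hb
    have habΔ : (a : Δ) * b = h := congrArg Subtype.val hab
    have hbH : (b : Δ) ∈ H := by
      have : (b : Δ) = (a : Δ)⁻¹ * h := by
        rw [← habΔ]; group
      rw [this]; exact mul_mem (inv_mem (hKH hk)) hh
    have hbLr : (b : Δ) ∈ Lr := hKrH_Lr _ hbKr hbH
    refine ⟨⟨b, hbLr⟩, ?_⟩
    show QuotientGroup.mk' (K.subgroupOf H) ⟨(b : Δ), hLrH hbLr⟩ = _
    rw [QuotientGroup.mk'_eq_mk']
    have hbP : (b : Δ) ∈ P := hKrP hbKr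
    have hzK : (b : Δ)⁻¹ * a * b ∈ K := by
      have := hKnorm (b : Δ)⁻¹ (inv_mem hbP) a hk
      simpa using this
    refine ⟨⟨(b : Δ)⁻¹ * a * b, hKH hzK⟩, hzK, ?_⟩
    ext
    show (b : Δ) * ((b : Δ)⁻¹ * a * b) = h
    rw [← habΔ]; group
  -- kernel
  have hker : f.ker = (L ⊓ Lr).subgroupOf Lr := by
    ext ⟨x, hx⟩
    simp only [MonoidHom.mem_ker, Subgroup.mem_subgroupOf, Subgroup.mem_inf]
    constructor
    · intro hfx
      have hxK : x ∈ K := by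
        have : (⟨x, hLrH hx⟩ : ↥H) ∈ K.subgroupOf H := by
          rwa [← QuotientGroup.eq_one_iff (⟨x, hLrH hx⟩ : ↥H)]
        exact this
      exact ⟨(hL ▸ Subgroup.mem_inf.2 ⟨hxK, hKrHr (hLrKr hx)⟩ : x ∈ L), hx⟩
    · rintro ⟨hxL, -⟩
      have hxK : x ∈ K := (hL ▸ hxL : x ∈ K ⊓ Hr).1
      show (QuotientGroup.mk' (K.subgroupOf H)) ⟨x, hLrH hx⟩ = 1
      exact (QuotientGroup.eq_one_iff _).mpr hxK
  exact ⟨(QuotientGroup.quotientMulEquivOfEq hker.symm).trans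
    (QuotientGroup.quotientKerEquivOfSurjective f hsurj)⟩
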